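/- Let p : E → B be a fibration and suppose there is a continuous section s : E ×_B E → E^{[0,1]}_B of the evaluation map Π(γ) = (γ(0),γ(1)) defined on all of E ×_B E, where E^{[0,1]}_B is the space of paths in E whose composite with p is constant. If E ×_B E has the homotopy type of a CW complex, then each fiber X of p is contractible. -/

import Mathlib

universe u

open unitInterval

/-! The December 2024 Mathlib notion `RelativeCWComplex` (no longer in Mathlib), restated. -/

namespace RelativeCWComplex

/-- The `n`-sphere, as the unit sphere in `ℝ^(n+1)`. -/
noncomputable def sphere (n : ℤ) : TopCat.{u} :=
  TopCat.of <| ULift <| Metric.sphere (0 : EuclideanSpace ℝ <| Fin <| Int.toNat <| n + 1) 1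

/-- The `n`-disk, as the closed unit ball in `ℝ^n`. -/
noncomputable def disk (n : ℤ) : TopCat.{u} :=
  TopCat.of <| ULift <| Metric.closedBall (0 : EuclideanSpace ℝ <| Fin <| Int.toNat n) 1

/-- The inclusion of the boundary sphere into the disk. -/
noncomputable def sphereInclusion (n : ℤ) : sphere.{u} n ⟶ disk.{u} (n + 1) :=
  TopCat.ofHom ⟨fun x => ⟨⟨x.down.1, le_of_eq x.down.2⟩⟩,
    Homeomorph.ulift.symm.continuous.comp
      ((continuous_subtype_val.comp Homeomorph.ulift.continuous).subtype_mk _)⟩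

/-- Attaching generalized cells along `f` to `X` gives `X'`. -/
structure AttachGeneralizedCells {S D : TopCat.{u}} (f : S ⟶ D) (X X' : TopCat.{u}) where
  cells : Type u
  attachMaps : cells → (S ⟶ X)
  iso_pushout : X' ≅ CategoryTheory.Limits.pushout
    (CategoryTheory.Limits.Sigma.desc attachMaps)
    (CategoryTheory.Limits.Sigma.map fun _ => f)

/-- Attaching `(n+1)`-disks along their boundary spheres. -/
def AttachCells (n : ℤ) := AttachGeneralizedCells (sphereInclusion.{u} n)

end RelativeCWComplex

/-- A relative CW complex (December 2024 Mathlib definition). -/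
structure RelativeCWComplex where
  sk : ℕ → TopCat.{u}
  attachCells (n : ℕ) : RelativeCWComplex.AttachCells.{u} ((n : ℤ) - 1) (sk n) (sk (n + 1))

namespace RelativeCWComplex

/-- The inclusion of a skeleton into the next one. -/
noncomputable def skInclusion (X : RelativeCWComplex.{u}) (n : ℕ) : X.sk n ⟶ X.sk (n + 1) :=
  CategoryTheory.CategoryStruct.comp (CategoryTheory.Limits.pushout.inl _ _)
    (X.attachCells n).iso_pushout.inv

/-- The topological space underlying a relative CW complex (colimit of its skeleta). -/
noncomputable def toTopCat (X : RelativeCWComplex.{u}) : TopCat.{u} :=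
  CategoryTheory.Limits.colimit (CategoryTheory.Functor.ofSequence (skInclusion X))

end RelativeCWComplex

/-- Cohen–Farber–Weinberger, Proposition 4.5: if the evaluation fibration
`Π : E^{[0,1]}_B → E ×_B E`, `Π(γ) = (γ(0),γ(1))`, admits a global continuous
section and `E ×_B E` has the homotopy type of a CW complex, then the fibers of
the fibration `p : E → B` are contractible. -/
theorem fiber_contractible_of_global_section
    {E B : Type u} [TopologicalSpace E] [TopologicalSpace B]
    [PathConnectedSpace B] [Nonempty E]
    (p : E → B) (hp : Continuous p)
    -- `p` is a (Hurewicz) fibration: it has the homotopy lifting property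
    (hfib : ∀ (Y : Type u) [TopologicalSpace Y] (G : C(Y × I, B)) (g : C(Y, E)),
      (∀ y, p (g y) = G (y, 0)) →
      ∃ G' : C(Y × I, E), (∀ y, G' (y, 0) = g y) ∧ ∀ z, p (G' z) = G z)
    -- `E ×_B E` has the homotopy type of a CW complex
    (hCW : ∃ X : RelativeCWComplex.{u},
      Nonempty (ContinuousMap.HomotopyEquiv {q : E × E // p q.1 = p q.2}
        X.toTopCat))
    -- a global continuous parametrised motion planning algorithm:
    -- a continuous section of `Π` defined on all of `E ×_B E`
    (s : C({q : E × E // p q.1 = p q.2}, C(I, E)))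
    (hs : ∀ q, s q 0 = q.1.1 ∧ s q 1 = q.1.2 ∧ ∀ t : I, p (s q t) = p q.1.1) :
    ∀ b : B, ContractibleSpace (p ⁻¹' {b} : Set E) := by
  intro b
  -- Step 1: the fiber over `b` is nonempty, using the lifting property
  obtain ⟨e⟩ := ‹Nonempty E›
  obtain ⟨γ⟩ : Nonempty (Path (p e) b) := ⟨PathConnectedSpace.somePath _ _⟩
  obtain ⟨G', hG'0, hG'p⟩ := hfib PUnit.{u+1}
    ⟨fun z => γ z.2, γ.continuous.comp continuous_snd⟩
    (ContinuousMap.const _ e) (fun y => by simp)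
  have hx₀ : p (G' (PUnit.unit, 1)) = b := by
    have := hG'p (PUnit.unit, 1)
    simpa using this
  set x₀ : (p ⁻¹' {b} : Set E) := ⟨G' (PUnit.unit, 1), hx₀⟩ with hx₀def
  -- Step 2: contract the fiber to `x₀` using the section `s`
  rw [contractible_iff_id_nullhomotopic]
  refine ⟨x₀, ?_⟩
  -- the map sending a point `x` of the fiber to the pair `(x, x₀)` in `E ×_B E`
  have hq : ∀ x : (p ⁻¹' {b} : Set E), p (x : E) = p (x₀ : E) := by
    intro x
    have hx : p (x : E) = b := x.2
    rw [hx, hx₀]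
  set qmap : C((p ⁻¹' {b} : Set E), {q : E × E // p q.1 = p q.2}) :=
    ⟨fun x => ⟨((x : E), (x₀ : E)), hq x⟩, by
      apply Continuous.subtype_mk
      exact (continuous_subtype_val.prodMk continuous_const)⟩ with hqmap
  refine ⟨?_⟩
  refine ⟨⟨fun z => ⟨s (qmap z.2) z.1, ?_⟩, ?_⟩, ?_, ?_⟩
  · -- the path stays in the fiber
    have h := (hs (qmap z.2)).2.2 z.1
    simp only [Set.mem_preimage, Set.mem_singleton_iff]
    rw [h]
    exact (z.2).2
  · -- continuity
    apply Continuous.subtype_mk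
    exact s.uncurry.continuous.comp
      ((qmap.continuous.comp continuous_snd).prodMk continuous_fst)
  · intro x
    ext
    exact (hs (qmap x)).1
  · intro x
    ext
    exact (hs (qmap x)).2.1
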